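/- Let k ≥ 1, n ≥ 1 be integers and for t ∈ ℝ let a_j(t) be the Fourier coefficients of e^{t/z}(1+z)^k. For every real t at which D_n(t) := det T_n(t) ≠ 0, the derivative of the Toeplitz determinant satisfies D_n′(t) = U⁺_n(t) · D_n(t), where U⁺_n(t) is the first component of T_n(t)^{−1} a⁺(t); equivalently, (d/dt) log D_n(t) = U⁺_n(t). -/

import Mathlib

open scoped BigOperators
open Matrix

/-- The Fourier coefficients `a_j(t)` of the symbol `e^{t/z} (1+z)^k`. -/
noncomputable def aCoeff (k : ℕ) (j : ℤ) (t : ℝ) : ℝ :=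
  ∑' ℓ : ℕ, t ^ ℓ / (Nat.factorial ℓ : ℝ) *
    (if 0 ≤ j + (ℓ : ℤ) then (Nat.choose k (j + (ℓ : ℤ)).toNat : ℝ) else 0)

/-- The `n × n` Toeplitz matrix `T_n(t)` with `(i,j)` entry `a_{i-j}(t)`. -/
noncomputable def Tn (k n : ℕ) (t : ℝ) : Matrix (Fin n) (Fin n) ℝ :=
  Matrix.of fun i j : Fin n => aCoeff k (((i : ℕ) : ℤ) - ((j : ℕ) : ℤ)) t

/-- `D_n(t) = det T_n(t)`. -/
noncomputable def Dn (k n : ℕ) (t : ℝ) : ℝ := Matrix.det (Tn k n t)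

/-- The vector `a⁺(t) = (a_1(t), …, a_n(t))`. -/
noncomputable def aplus (k n : ℕ) (t : ℝ) : Fin n → ℝ :=
  fun i => aCoeff k (((i : ℕ) : ℤ) + 1) t

lemma aCoeff_eq_sum (k : ℕ) (j : ℤ) (t : ℝ) (N : ℕ) (hN : (k : ℤ) < j + N) :
    aCoeff k j t = ∑ ℓ ∈ Finset.range N, t ^ ℓ / (Nat.factorial ℓ : ℝ) *
      (if 0 ≤ j + (ℓ : ℤ) then (Nat.choose k (j + (ℓ : ℤ)).toNat : ℝ) else 0) := by
  apply tsum_eq_sum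
  intro ℓ hℓ
  have hNℓ : N ≤ ℓ := by simpa using hℓ
  split_ifs with h
  · have : k < (j + (ℓ : ℤ)).toNat := by omega
    rw [Nat.choose_eq_zero_of_lt this]
    simp
  · simp

lemma hasDerivAt_aCoeff (k : ℕ) (j : ℤ) (t : ℝ) :
    HasDerivAt (fun s => aCoeff k j s) (aCoeff k (j + 1) t) t := by
  set N : ℕ := k + j.natAbs + 1 with hNdef
  have hN : (k : ℤ) < j + (N + 1 : ℕ) := by
    omega
  have hN' : (k : ℤ) < (j + 1) + (N + 1 : ℕ) := by push_cast at hN ⊢; omega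
  have key : ∀ s : ℝ, aCoeff k j s = ∑ ℓ ∈ Finset.range (N + 1),
      s ^ ℓ / (Nat.factorial ℓ : ℝ) *
        (if 0 ≤ j + (ℓ : ℤ) then (Nat.choose k (j + (ℓ : ℤ)).toNat : ℝ) else 0) :=
    fun s => aCoeff_eq_sum k j s (N + 1) hN
  have key' : aCoeff k (j + 1) t = ∑ ℓ ∈ Finset.range (N + 1),
      t ^ ℓ / (Nat.factorial ℓ : ℝ) *
        (if 0 ≤ (j + 1) + (ℓ : ℤ) then (Nat.choose k ((j + 1) + (ℓ : ℤ)).toNat : ℝ) else 0) :=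
    aCoeff_eq_sum k (j + 1) t (N + 1) hN'
  have hderiv : HasDerivAt (fun s : ℝ => ∑ ℓ ∈ Finset.range (N + 1),
      s ^ ℓ / (Nat.factorial ℓ : ℝ) *
        (if 0 ≤ j + (ℓ : ℤ) then (Nat.choose k (j + (ℓ : ℤ)).toNat : ℝ) else 0))
      (∑ ℓ ∈ Finset.range (N + 1),
        ((ℓ : ℝ) * t ^ (ℓ - 1)) / (Nat.factorial ℓ : ℝ) *
          (if 0 ≤ j + (ℓ : ℤ) then (Nat.choose k (j + (ℓ : ℤ)).toNat : ℝ) else 0)) t := by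
    apply HasDerivAt.fun_sum
    intro ℓ _
    exact ((hasDerivAt_pow ℓ t).div_const _).mul_const _
  have hsum : (∑ ℓ ∈ Finset.range (N + 1),
        ((ℓ : ℝ) * t ^ (ℓ - 1)) / (Nat.factorial ℓ : ℝ) *
          (if 0 ≤ j + (ℓ : ℤ) then (Nat.choose k (j + (ℓ : ℤ)).toNat : ℝ) else 0))
      = aCoeff k (j + 1) t := by
    rw [key', Finset.sum_range_succ' (fun ℓ => ((ℓ : ℝ) * t ^ (ℓ - 1)) / (Nat.factorial ℓ : ℝ) *
          (if 0 ≤ j + (ℓ : ℤ) then (Nat.choose k (j + (ℓ : ℤ)).toNat : ℝ) else 0)),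
        Finset.sum_range_succ (fun ℓ => t ^ ℓ / (Nat.factorial ℓ : ℝ) *
          (if 0 ≤ (j + 1) + (ℓ : ℤ) then (Nat.choose k ((j + 1) + (ℓ : ℤ)).toNat : ℝ) else 0))]
    have hlast : (if 0 ≤ (j + 1) + (N : ℤ) then (Nat.choose k ((j + 1) + (N : ℤ)).toNat : ℝ) else 0) = 0 := by
      split_ifs with h
      · have : k < ((j + 1) + (N : ℤ)).toNat := by push_cast at hN'; omega
        rw [Nat.choose_eq_zero_of_lt this]; simp
      · rfl
    rw [hlast]
    simp only [Nat.cast_zero, zero_mul, zero_div, zero_mul, mul_zero, add_zero]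
    apply Finset.sum_congr rfl
    intro ℓ _
    have hfac : (Nat.factorial (ℓ + 1) : ℝ) = (ℓ + 1) * (Nat.factorial ℓ : ℝ) := by
      rw [Nat.factorial_succ]; push_cast; ring
    have hne : (Nat.factorial ℓ : ℝ) ≠ 0 := Nat.cast_ne_zero.mpr (Nat.factorial_ne_zero ℓ)
    have hcond : j + ((ℓ : ℤ) + 1) = (j + 1) + (ℓ : ℤ) := by ring
    push_cast
    rw [hcond, hfac]
    have h1 : ((ℓ : ℝ) + 1) ≠ 0 := by positivity
    field_simp
  rw [funext key, ← hsum]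
  exact hderiv

/-- Jacobi's formula (column form). -/
lemma hasDerivAt_det {n : ℕ} (A : ℝ → Matrix (Fin n) (Fin n) ℝ)
    (A' : Matrix (Fin n) (Fin n) ℝ) (t : ℝ)
    (h : ∀ i j, HasDerivAt (fun s => A s i j) (A' i j) t) :
    HasDerivAt (fun s => (A s).det)
      (∑ i : Fin n, ((A t).updateCol i (fun j => A' j i)).det) t := by
  have key : ∀ s : ℝ, (A s).det = ∑ σ : Equiv.Perm (Fin n),
      ((Equiv.Perm.sign σ : ℤ) : ℝ) * ∏ i, A s (σ i) i := fun s => Matrix.det_apply' (A s)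
  have hd : HasDerivAt (fun s => ∑ σ : Equiv.Perm (Fin n),
      ((Equiv.Perm.sign σ : ℤ) : ℝ) * ∏ i, A s (σ i) i)
      (∑ σ : Equiv.Perm (Fin n), ((Equiv.Perm.sign σ : ℤ) : ℝ) *
        ∑ i, (∏ j ∈ Finset.univ.erase i, A t (σ j) j) • A' (σ i) i) t := by
    apply HasDerivAt.fun_sum
    intro σ _
    exact (HasDerivAt.fun_finsetProd (fun i _ => h (σ i) i)).const_mul _
  have heq : (∑ σ : Equiv.Perm (Fin n), ((Equiv.Perm.sign σ : ℤ) : ℝ) *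
        ∑ i, (∏ j ∈ Finset.univ.erase i, A t (σ j) j) • A' (σ i) i)
      = ∑ i : Fin n, ((A t).updateCol i (fun j => A' j i)).det := by
    simp only [Finset.mul_sum, smul_eq_mul]
    rw [Finset.sum_comm]
    apply Finset.sum_congr rfl
    intro i _
    rw [Matrix.det_apply']
    apply Finset.sum_congr rfl
    intro σ _
    have hprod : (∏ j, ((A t).updateCol i (fun r => A' r i)) (σ j) j)
        = A' (σ i) i * ∏ j ∈ Finset.univ.erase i, A t (σ j) j := by
      rw [← Finset.mul_prod_erase Finset.univ _ (Finset.mem_univ i)]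
      congr 1
      · rw [Matrix.updateCol_self]
      · apply Finset.prod_congr rfl
        intro j hj
        rw [Matrix.updateCol_ne (Finset.ne_of_mem_erase hj)]
    rw [hprod]
    ring
  rw [funext key, ← heq]
  exact hd

/-- Identity (3.22) of Tracy–Widom: `(d/dt) log D_n(t) = U⁺_n(t)`, i.e.
`D_n'(t) = U⁺_n(t) D_n(t)`, where `U⁺_n(t)` is the first component of
`T_n(t)⁻¹ a⁺(t)`. -/
theorem deriv_log_Dn (k n : ℕ) (hk : 1 ≤ k) (hn : 1 ≤ n) (t : ℝ)
    (ht : Dn k n t ≠ 0) :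
    deriv (Dn k n) t = ((Tn k n t)⁻¹ *ᵥ aplus k n t) ⟨0, by omega⟩ * Dn k n t := by
  set i0 : Fin n := ⟨0, by omega⟩ with hi0
  have hD : HasDerivAt (Dn k n)
      (∑ i : Fin n, ((Tn k n t).updateCol i
        (fun j => aCoeff k (((j : ℕ) : ℤ) - ((i : ℕ) : ℤ) + 1) t)).det) t := by
    have := hasDerivAt_det (fun s => Tn k n s)
      (Matrix.of fun i j : Fin n =>
        aCoeff k (((i : ℕ) : ℤ) - ((j : ℕ) : ℤ) + 1) t) t
      (fun i j => hasDerivAt_aCoeff k (((i : ℕ) : ℤ) - ((j : ℕ) : ℤ)) t)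
    exact this
  have hzero : ∀ i : Fin n, i ≠ i0 →
      ((Tn k n t).updateCol i
        (fun j => aCoeff k (((j : ℕ) : ℤ) - ((i : ℕ) : ℤ) + 1) t)).det = 0 := by
    intro i hi
    have hpos : 0 < (i : ℕ) := by
      rcases Nat.eq_zero_or_pos (i : ℕ) with h | h
      · exact absurd (Fin.ext h) hi
      · exact h
    set i' : Fin n := ⟨(i : ℕ) - 1, by omega⟩ with hi'
    have hne : i' ≠ i := by
      intro hcontra
      have := congrArg (Fin.val) hcontra
      simp only [hi'] at this
      omega
    apply Matrix.det_zero_of_column_eq hne.symm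
    intro j
    rw [Matrix.updateCol_self, Matrix.updateCol_ne hne]
    show aCoeff k _ t = Tn k n t j i'
    simp only [Tn, Matrix.of_apply, hi']
    congr 1
    omega
  have hsum : (∑ i : Fin n, ((Tn k n t).updateCol i
        (fun j => aCoeff k (((j : ℕ) : ℤ) - ((i : ℕ) : ℤ) + 1) t)).det)
      = ((Tn k n t).updateCol i0 (aplus k n t)).det := by
    rw [Finset.sum_eq_single i0 (fun i _ hi => hzero i hi) (by simp)]
    congr 1
  have hunit : IsUnit (Tn k n t).det := isUnit_iff_ne_zero.mpr ht
  have hcramer := Matrix.det_smul_inv_mulVec_eq_cramer (Tn k n t) (aplus k n t) hunit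
  have hc0 : (Tn k n t).det * ((Tn k n t)⁻¹ *ᵥ aplus k n t) i0
      = ((Tn k n t).updateCol i0 (aplus k n t)).det := by
    have := congrFun hcramer i0
    simpa [Matrix.cramer_apply, smul_eq_mul] using this
  rw [hD.deriv, hsum, ← hc0, Dn]
  ring
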